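/- Let G = K_n be the complete graph on vertices v_1, v_2, …, v_n (n ≥ 3), with v_out = v_1 and v_in = v_2. If r ∈ ℝ^n lies in the convex hull of { tr_ω : ω a proper walk from v_2 to v_1 }, then r_2 ≤ 1 + Σ_{j=3}^n r_j, and for every index i with 3 ≤ i ≤ n, r_i ≤ Σ_{j ∉ {1, i}} r_j. -/

import Mathlib

open scoped Classical

noncomputable section

/-- The trace of a walk: the number of occurrences of each vertex along the walk,
viewed as a vector in `ℝ^V`. -/
def trace {V : Type*} [DecidableEq V] {G : SimpleGraph V} {u v : V} (ω : G.Walk u v) : V → ℝ :=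
  fun x => (ω.support.count x : ℝ)

/-- A walk from `vin` to `vout` is proper if it visits `vout` exactly once
(namely as its final vertex). -/
def IsProper {V : Type*} [DecidableEq V] {G : SimpleGraph V} {vin vout : V}
    (ω : G.Walk vin vout) : Prop :=
  ω.support.count vout = 1

/-- The set of traces of proper walks from `vin` to `vout`, as vectors in `ℝ^V`. -/
def traceSet {V : Type*} [DecidableEq V] (G : SimpleGraph V) (vin vout : V) : Set (V → ℝ) :=
  {f | ∃ ω : G.Walk vin vout, IsProper ω ∧ f = trace ω}

/-- `Ψ(G)`: the relative interior (interior with respect to the affine span) of the convex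
hull of the traces of proper walks from `vin` to `vout`. -/
def Psi {V : Type*} [Fintype V] [DecidableEq V] (G : SimpleGraph V) (vin vout : V) :
    Set (V → ℝ) :=
  intrinsicInterior ℝ (convexHull ℝ (traceSet G vin vout))

/-- The matrix `M_β` associated to a graph `G` with distinguished vertices `vin, vout`
and vertex weights `β`. -/
def Mmat {V : Type*} [Fintype V] [DecidableEq V] (G : SimpleGraph V) (vin vout : V)
    (β : V → ℝ) : Matrix V V ℝ :=
  fun v w =>
    if (v = vout ∧ w = vout) ∨ (v = vin ∧ w = vout) then 1
    else if G.Adj v w ∧ v ≠ vout ∧ w ≠ vout then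
      β v / ∑ u ∈ Finset.univ.filter (fun u => G.Adj u w), β u
    else 0

/-- The equation `τ_ρ = r` is solvable on `G`: there is a positive vertex-weight function `β`
with `M_β r = r` and `r(vout) = 1`. -/
def Solvable {V : Type*} [Fintype V] [DecidableEq V] (G : SimpleGraph V) (vin vout : V)
    (r : V → ℝ) : Prop :=
  ∃ β : V → ℝ, (∀ v, 0 < β v) ∧ (Mmat G vin vout β).mulVec r = r ∧ r vout = 1

lemma count_aux {α : Type*} [DecidableEq α] (x : α) :
    ∀ l : List α, l.Chain' (· ≠ ·) →
      2 * l.count x ≤ l.length + 1 ∧ (l.head? ≠ some x → 2 * l.count x ≤ l.length) := by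
  intro l
  induction l with
  | nil => simp
  | cons a t ih =>
    intro hc
    rw [List.Chain', List.isChain_cons] at hc
    obtain ⟨ih1, ih2⟩ := ih hc.2
    by_cases hax : a = x
    · subst hax
      have ht : t.head? ≠ some a := fun h => (hc.1 a h) rfl
      have := ih2 ht
      constructor
      · simp only [List.count_cons_self, List.length_cons]; omega
      · intro h; simp at h
    · have hcount : (a :: t).count x = t.count x := by
        rw [List.count_cons_of_ne hax]
      constructor
      · simp only [hcount, List.length_cons]; omega
      · intro _; simp only [hcount, List.length_cons]; omega

lemma count_last {α : Type*} [DecidableEq α] (x : α) (l : List α)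
    (hc : l.Chain' (· ≠ ·)) (hl : l.getLast? ≠ some x) :
    2 * l.count x ≤ l.length := by
  have hc' : l.reverse.Chain' (· ≠ ·) := by
    unfold List.Chain' at hc ⊢; rw [List.isChain_reverse]
    exact hc.imp (fun a b h => Ne.symm h)
  have := (count_aux x l.reverse hc').2 (by rwa [List.head?_reverse])
  simpa using this

lemma count_both {α : Type*} [DecidableEq α] (x a : α) (t : List α)
    (hc : (a :: t).Chain' (· ≠ ·)) (ha : a ≠ x) (hl : (a :: t).getLast? ≠ some x) :
    2 * (a :: t).count x + 1 ≤ (a :: t).length := by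
  have hcount : (a :: t).count x = t.count x := by
    rw [List.count_cons_of_ne ha]
  have ht : t.getLast? ≠ some x := by
    cases t with
    | nil => simp
    | cons b u => rwa [List.getLast?_cons_cons] at hl
  have := count_last x t (List.isChain_cons.mp hc).2 ht
  simp only [hcount, List.length_cons]; omega

/-- For the complete graph `K_n` with `vout = v_1`, `vin = v_2`: if `r` lies in the convex
hull of the traces of proper walks then `r_2 ≤ 1 + Σ_{j ≥ 3} r_j` and, for each `i ≥ 3`,
`r_i ≤ Σ_{j ∉ {1, i}} r_j`. -/
theorem convexHull_traces_ineq (n : ℕ) (hn : 3 ≤ n) (r : Fin n → ℝ)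
    (hr : r ∈ convexHull ℝ
      (traceSet (⊤ : SimpleGraph (Fin n)) ⟨1, by omega⟩ ⟨0, by omega⟩)) :
    (r ⟨1, by omega⟩ ≤ 1 + ∑ j ∈ Finset.univ \ {⟨0, by omega⟩, ⟨1, by omega⟩}, r j) ∧
      (∀ i : Fin n, 2 ≤ (i : ℕ) → r i ≤ ∑ j ∈ Finset.univ \ {⟨0, by omega⟩, i}, r j) := by
  set v1 : Fin n := ⟨0, by omega⟩ with hv1
  set v2 : Fin n := ⟨1, by omega⟩ with hv2
  have hv12 : v1 ≠ v2 := by simp [hv1, hv2, Fin.ext_iff]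
  set S : Set (Fin n → ℝ) :=
    {f | (f v2 ≤ 1 + ∑ j ∈ Finset.univ \ {v1, v2}, f j) ∧
      (∀ i : Fin n, 2 ≤ (i : ℕ) → f i ≤ ∑ j ∈ Finset.univ \ {v1, i}, f j)} with hS
  have hconv : Convex ℝ S := by
    intro f hf g hg a b ha hb hab
    have key : ∀ F : Finset (Fin n),
        ∑ j ∈ F, (a • f + b • g) j = a * ∑ j ∈ F, f j + b * ∑ j ∈ F, g j := by
      intro F
      simp [Finset.mul_sum, Finset.sum_add_distrib]
    constructor
    · rw [key]
      have h1 := hf.1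
      have h2 := hg.1
      simp only [Pi.add_apply, Pi.smul_apply, smul_eq_mul]
      nlinarith
    · intro i hi
      rw [key]
      have h1 := hf.2 i hi
      have h2 := hg.2 i hi
      simp only [Pi.add_apply, Pi.smul_apply, smul_eq_mul]
      nlinarith
  have hsub : traceSet (⊤ : SimpleGraph (Fin n)) v2 v1 ⊆ S := by
    rintro f ⟨ω, hω, rfl⟩
    set s := ω.support with hs
    have hchain : s.Chain' (· ≠ ·) :=
      (SimpleGraph.Walk.isChain_adj_support ω).imp (fun h => by simpa using h)
    have hne : s ≠ [] := ω.support_ne_nil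
    have hlast : s.getLast? = some v1 := by
      rw [List.getLast?_eq_getLast hne, ω.getLast_support]
    have hcons : s = v2 :: s.tail := ω.support_eq_cons
    have hcv1 : s.count v1 = 1 := hω
    have htot : ∑ j : Fin n, s.count j = s.length := by
      have := Multiset.sum_count_eq_card (s := Finset.univ)
        (m := (s : Multiset (Fin n))) (fun a _ => Finset.mem_univ a)
      simpa using this
    constructor
    · -- first inequality
      have h2 : 2 * s.count v2 ≤ s.length := by
        apply count_last v2 s hchain
        rw [hlast]; simp [hv12]
      have hsplit : ∑ j ∈ Finset.univ \ {v1, v2}, s.count j + (s.count v1 + s.count v2)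
          = s.length := by
        rw [← htot, ← Finset.sum_pair (f := fun j => List.count j s) hv12]
        exact Finset.sum_sdiff (Finset.subset_univ _)
      have hnat : s.count v2 ≤ 1 + ∑ j ∈ Finset.univ \ {v1, v2}, s.count j := by omega
      have := (Nat.cast_le (α := ℝ)).mpr hnat
      push_cast at this
      simpa [trace] using this
    · intro i hi
      have hiv1 : v1 ≠ i := by simp [hv1, Fin.ext_iff]; omega
      have hiv2 : v2 ≠ i := by simp [hv2, Fin.ext_iff]; omega
      have h2 : 2 * s.count i + 1 ≤ s.length := by
        rw [hcons]
        rw [hcons] at hchain hlast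
        apply count_both i v2 s.tail hchain hiv2
        rw [hlast]
        simp [hiv1]
      have hsplit : ∑ j ∈ Finset.univ \ {v1, i}, s.count j + (s.count v1 + s.count i)
          = s.length := by
        rw [← htot, ← Finset.sum_pair (f := fun j => List.count j s) hiv1]
        exact Finset.sum_sdiff (Finset.subset_univ _)
      have hnat : s.count i ≤ ∑ j ∈ Finset.univ \ {v1, i}, s.count j := by omega
      have := (Nat.cast_le (α := ℝ)).mpr hnat
      push_cast at this
      simpa [trace] using this
  have := convexHull_min hsub hconv hr
  exact this


end
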